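/- Let q > 0, 0 < m < 1, h = 1/(4(q+1)), m ≠ 2h, h ≠ 1/4, and s = s₁ = (4h-1)/(2(m-2h)). Then the matrix J = [[1/2-2h, 2h-1/2],[s(2h-m), s(m-2h)]] is nonzero, nilpotent (J² = 0), has trace 0 and determinant 0. -/

import Mathlib

theorem stmt_11 (q m h s : ℝ) (hq : 0 < q) (hm : 0 < m) (hm1 : m < 1)
    (hh : h = 1/(4*(q+1))) (hm2h : m ≠ 2*h) (hh4 : h ≠ 1/4)
    (hs : s = (4*h - 1)/(2*(m - 2*h)))
    (J : Matrix (Fin 2) (Fin 2) ℝ)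
    (hJ : J = !![1/2 - 2*h, 2*h - 1/2; s*(2*h - m), s*(m - 2*h)]) :
    J ≠ 0 ∧ J^2 = 0 ∧ J.trace = 0 ∧ J.det = 0 := by
  have hne : m - 2*h ≠ 0 := sub_ne_zero.mpr hm2h
  have hsm : s * (m - 2*h) = 2*h - 1/2 := by
    rw [hs, div_mul_eq_mul_div, div_eq_iff (mul_ne_zero two_ne_zero hne)]; ring
  have hsm' : s * (2*h - m) = 1/2 - 2*h := by
    have : (2*h - m) = -(m - 2*h) := by ring
    rw [this, mul_neg, hsm]; ring
  rw [hJ, hsm, hsm']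
  have ha : (1/2 : ℝ) - 2*h ≠ 0 := by
    intro h0
    apply hh4
    linarith
  refine ⟨?_, ?_, ?_, ?_⟩
  · intro h0
    have := congrFun (congrFun h0 0) 0
    simp [Matrix.zero_apply] at this
    exact ha (by linarith)
  · ext i j
    fin_cases i <;> fin_cases j <;>
      simp [pow_two, Matrix.mul_apply, Fin.sum_univ_succ] <;> try ring
  · simp [Matrix.trace_fin_two] <;> try ring
  · simp [Matrix.det_fin_two] <;> try ring
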